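/- Let x = (x_1,…,x_R) be a vector of distinct real numbers and A = A(x). Then max_{1 ≤ m ≤ R} Σ_{n ≠ m} a_{m,n}² ≤ ‖A‖² ≤ 3 · max_{1 ≤ m ≤ R} Σ_{n ≠ m} a_{m,n}². -/

import Mathlib

/-- The generalized Hilbert matrix `A(x)` with entries `a_{m,n} = 1/(x_m - x_n)`
for `m ≠ n` and `0` on the diagonal. -/
noncomputable def Amat {R : ℕ} (x : Fin R → ℝ) : Matrix (Fin R) (Fin R) ℝ :=
  Matrix.of fun m n => if m = n then 0 else 1 / (x m - x n)

/-- The spectral norm of a real matrix: the operator norm induced by the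
Euclidean norm. -/
noncomputable def specNorm {R : ℕ} (M : Matrix (Fin R) (Fin R) ℝ) : ℝ :=
  ‖Matrix.toEuclideanCLM (𝕜 := ℝ) M‖

open Matrix Finset

variable {R : ℕ}

lemma Amat_diag (x : Fin R → ℝ) (m : Fin R) : Amat x m m = 0 := by simp [Amat]

lemma Amat_anti (x : Fin R → ℝ) (m n : Fin R) : Amat x n m = - Amat x m n := by
  rcases eq_or_ne m n with h | h
  · subst h; simp [Amat]
  · simp only [Amat, Matrix.of_apply, if_neg h, if_neg (Ne.symm h)]
    rw [← neg_sub (x m) (x n), one_div, one_div, inv_neg]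

lemma Amat_apply_ne (x : Fin R → ℝ) {m n : Fin R} (h : m ≠ n) :
    Amat x m n = 1 / (x m - x n) := by simp [Amat, h]

lemma conjTranspose_Amat (x : Fin R → ℝ) : (Amat x)ᴴ = -(Amat x) := by
  ext m n
  simp [Matrix.conjTranspose_apply, Amat_anti x n m]

/-- antisymmetry of the bilinear form -/
lemma Amat_bilin_anti (x : Fin R → ℝ) (v z : Fin R → ℝ) :
    v ⬝ᵥ (Amat x *ᵥ z) = -(z ⬝ᵥ (Amat x *ᵥ v)) := by
  simp only [dotProduct, Matrix.mulVec, Finset.mul_sum, ← Finset.sum_neg_distrib]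
  rw [Finset.sum_comm]
  refine Finset.sum_congr rfl fun m _ => Finset.sum_congr rfl fun k _ => ?_
  rw [Amat_anti x m k]
  ring

lemma eig_le (x : Fin R → ℝ) (hx : Function.Injective x) (S : ℝ) (hS0 : 0 ≤ S)
    (hS : ∀ m, ∑ n, (Amat x m n) ^ 2 ≤ S)
    {μ : ℝ} {w : Fin R → ℝ} (hw : ∑ n, (w n) ^ 2 = 1)
    (heig : ((Amat x)ᴴ * Amat x) *ᵥ w = μ • w) : μ ≤ 3 * S := by
  rcases le_or_gt μ 0 with hμ | hμ
  · linarith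
  set μs := Real.sqrt μ with hμsdef
  have hμs2 : μs ^ 2 = μ := Real.sq_sqrt hμ.le
  have hμspos : 0 < μs := Real.sqrt_pos.mpr hμ
  have hμsne : μs ≠ 0 := hμspos.ne'
  -- notation
  set A := Amat x with hA
  set rr : Fin R → ℝ := fun m => ∑ n, A m n with hrr
  set s : Fin R → ℝ := fun m => ∑ n, (A m n) ^ 2 with hs
  set M := Aᴴ * A with hM
  -- basic mulVec facts
  have hMv : ∀ v : Fin R → ℝ, M *ᵥ v = -(A *ᵥ (A *ᵥ v)) := by
    intro v
    rw [hM, ← Matrix.mulVec_mulVec, hA, conjTranspose_Amat, Matrix.neg_mulVec]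
  have hAAw : A *ᵥ (A *ᵥ w) = -(μ • w) := by
    have h := heig
    rw [hMv w] at h
    rw [← h, neg_neg]
  set u : Fin R → ℝ := μs⁻¹ • (A *ᵥ w) with hu
  have hAu : A *ᵥ u = (-μs) • w := by
    rw [hu, Matrix.mulVec_smul, hAAw]
    rw [smul_neg, smul_smul]
    rw [show μs⁻¹ * μ = μs by rw [← hμs2]; field_simp]
    rw [← neg_smul]
  have hAw : A *ᵥ w = μs • u := by
    rw [hu, smul_smul, mul_inv_cancel₀ hμsne, one_smul]
  have hMu : M *ᵥ u = μ • u := by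
    rw [hMv u, hAu, Matrix.mulVec_smul, hAw, smul_smul, smul_smul, hu, smul_smul, ← neg_smul]
    congr 1
    rw [← hμs2]
    field_simp
  -- u is a unit vector
  have hun : ∑ n, (u n) ^ 2 = 1 := by
    have h1 : ∑ n, (u n) ^ 2 = μs⁻¹ ^ 2 * ((A *ᵥ w) ⬝ᵥ (A *ᵥ w)) := by
      rw [dotProduct, Finset.mul_sum]
      refine Finset.sum_congr rfl fun n _ => ?_
      rw [hu]
      simp only [Pi.smul_apply, smul_eq_mul]
      ring
    have h2 : (A *ᵥ w) ⬝ᵥ (A *ᵥ w) = μ := by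
      rw [hA, Amat_bilin_anti x, ← hA, hAAw]
      rw [dotProduct_neg, dotProduct_smul, neg_neg, smul_eq_mul]
      rw [show w ⬝ᵥ w = ∑ n, (w n)^2 by
        rw [dotProduct]; exact Finset.sum_congr rfl fun n _ => (sq (w n)).symm]
      rw [hw, mul_one]
    rw [h1, h2, ← hμs2]
    field_simp
  -- entrywise identity for M
  have hdiag : ∀ m, A m m = 0 := fun m => Amat_diag x m
  have hanti : ∀ m n, A n m = - A m n := fun m n => Amat_anti x m n
  have hMent : ∀ m k, M m k =
      A m k * (rr k - rr m) + 2 * (A m k) ^ 2 + (if m = k then s m else 0) := by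
    intro m k
    have hmul : M m k = ∑ n, A m n * A k n := by
      rw [hM, Matrix.mul_apply]
      refine Finset.sum_congr rfl fun n _ => ?_
      rw [Matrix.conjTranspose_apply, star_trivial, hanti m n, hanti k n]
      ring
    rcases eq_or_ne m k with rfl | hmk
    · rw [hmul, if_pos rfl, hdiag m, hs]
      simp only
      rw [show (0:ℝ) * (rr m - rr m) + 2 * 0 ^ 2 + ∑ n, A m n ^ 2 = ∑ n, A m n ^ 2 by ring]
      exact Finset.sum_congr rfl fun n _ => (sq (A m n)).symm
    · have key : ∀ n, A m n * A k n =
          A m k * (A k n - A m n) +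
            ((if n = m then (A m k) ^ 2 else 0) + (if n = k then (A m k) ^ 2 else 0)) := by
        intro n
        rcases eq_or_ne n m with rfl | hnm
        · rw [hdiag n, if_pos rfl, if_neg hmk, hanti n k]
          ring
        rcases eq_or_ne n k with rfl | hnk
        · rw [hdiag n, if_neg hnm, if_pos rfl]
          ring
        · rw [if_neg hnm, if_neg hnk, hA]
          rw [Amat_apply_ne x hmk, Amat_apply_ne x (Ne.symm hnm),
            Amat_apply_ne x (Ne.symm hnk)]
          have d1 : x m - x n ≠ 0 := sub_ne_zero.mpr (hx.ne (Ne.symm hnm))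
          have d2 : x k - x n ≠ 0 := sub_ne_zero.mpr (hx.ne (Ne.symm hnk))
          have d3 : x m - x k ≠ 0 := sub_ne_zero.mpr (hx.ne hmk)
          field_simp
          ring
      rw [hmul, Finset.sum_congr rfl fun n _ => key n, Finset.sum_add_distrib,
        Finset.sum_add_distrib, ← Finset.mul_sum, Finset.sum_sub_distrib,
        Finset.sum_ite_eq' Finset.univ m fun _ => (A m k) ^ 2,
        Finset.sum_ite_eq' Finset.univ k fun _ => (A m k) ^ 2,
        if_pos (Finset.mem_univ m), if_pos (Finset.mem_univ k), if_neg hmk, hrr]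
      ring
  -- quadratic form decomposition
  have hQ : ∀ v : Fin R → ℝ, v ⬝ᵥ (M *ᵥ v) =
      (∑ m, ∑ k, v m * (A m k * (rr k - rr m)) * v k)
        + 2 * (∑ m, ∑ k, v m * (A m k) ^ 2 * v k)
        + ∑ m, s m * (v m) ^ 2 := by
    intro v
    have expand : v ⬝ᵥ (M *ᵥ v) = ∑ m, ∑ k, v m * (M m k) * v k := by
      simp only [dotProduct, Matrix.mulVec, Finset.mul_sum]
      exact Finset.sum_congr rfl fun m _ => Finset.sum_congr rfl fun k _ => by ring
    rw [expand]
    have step : ∀ m, ∑ k, v m * (M m k) * v k =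
        (∑ k, v m * (A m k * (rr k - rr m)) * v k)
          + (∑ k, 2 * (v m * (A m k) ^ 2 * v k))
          + s m * (v m) ^ 2 := by
      intro m
      rw [show s m * v m ^ 2 = ∑ k, (if m = k then s m * (v m * v k) else 0) by
        rw [Finset.sum_ite_eq Finset.univ m fun k => s m * (v m * v k),
          if_pos (Finset.mem_univ m)]
        ring]
      rw [← Finset.sum_add_distrib, ← Finset.sum_add_distrib]
      refine Finset.sum_congr rfl fun k _ => ?_
      rw [hMent m k]
      split_ifs with h
      · ring
      · ring
    rw [Finset.sum_congr rfl fun m _ => step m, Finset.sum_add_distrib,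
      Finset.sum_add_distrib]
    simp only [Finset.mul_sum]
  have hsS : ∀ m, s m ≤ S := fun m => hS m
  -- commutator part
  have hQc : ∀ v : Fin R → ℝ, (∑ m, ∑ k, v m * (A m k * (rr k - rr m)) * v k)
      = -2 * ∑ m, rr m * v m * ((A *ᵥ v) m) := by
    intro v
    have hsplit : ∀ m k : Fin R, v m * (A m k * (rr k - rr m)) * v k
        = v m * A m k * v k * rr k - v m * A m k * v k * rr m := by intro m k; ring
    calc (∑ m, ∑ k, v m * (A m k * (rr k - rr m)) * v k)
        = (∑ m, ∑ k, v m * A m k * v k * rr k) - ∑ m, ∑ k, v m * A m k * v k * rr m := by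
          rw [← Finset.sum_sub_distrib]
          refine Finset.sum_congr rfl fun m _ => ?_
          rw [← Finset.sum_sub_distrib]
          exact Finset.sum_congr rfl fun k _ => hsplit m k
      _ = -(∑ m, ∑ k, v m * A m k * v k * rr m) - ∑ m, ∑ k, v m * A m k * v k * rr m := by
          congr 1
          rw [Finset.sum_comm, ← Finset.sum_neg_distrib]
          refine Finset.sum_congr rfl fun i _ => ?_
          rw [← Finset.sum_neg_distrib]
          refine Finset.sum_congr rfl fun j _ => ?_
          rw [hanti i j]
          ring
      _ = -2 * ∑ m, ∑ k, v m * A m k * v k * rr m := by ring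
      _ = -2 * ∑ m, rr m * v m * ((A *ᵥ v) m) := by
          congr 1
          refine Finset.sum_congr rfl fun m _ => ?_
          simp only [Matrix.mulVec, dotProduct, Finset.mul_sum]
          exact Finset.sum_congr rfl fun k _ => by ring
  -- cancellation of the commutator terms for the pair (w, u)
  have hgu : (∑ m, rr m * u m * ((A *ᵥ u) m)) = -∑ m, rr m * w m * ((A *ᵥ w) m) := by
    rw [← Finset.sum_neg_distrib]
    refine Finset.sum_congr rfl fun m _ => ?_
    rw [hAu, hu]
    simp only [Pi.smul_apply, smul_eq_mul]
    rw [show rr m * (μs⁻¹ * (A *ᵥ w) m) * (-μs * w m)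
        = -(μs * μs⁻¹) * (rr m * w m * (A *ᵥ w) m) by ring,
      mul_inv_cancel₀ hμsne]
    ring
  -- bound on the Hadamard-square part
  have hQe : ∀ v : Fin R → ℝ, (∑ n, (v n) ^ 2 = 1) →
      (∑ m, ∑ k, v m * (A m k) ^ 2 * v k) ≤ S := by
    intro v hv
    have hsym : (∑ m, ∑ k, (v k) ^ 2 * (A m k) ^ 2)
        = ∑ m, ∑ k, (v m) ^ 2 * (A m k) ^ 2 := by
      rw [Finset.sum_comm]
      refine Finset.sum_congr rfl fun i _ => Finset.sum_congr rfl fun j _ => ?_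
      rw [hanti i j]
      ring
    calc (∑ m, ∑ k, v m * (A m k) ^ 2 * v k)
        ≤ ∑ m, ∑ k, ((v m) ^ 2 + (v k) ^ 2) / 2 * (A m k) ^ 2 := by
          refine Finset.sum_le_sum fun m _ => Finset.sum_le_sum fun k _ => ?_
          nlinarith [mul_nonneg (sq_nonneg (A m k)) (sq_nonneg (v m - v k))]
      _ = (∑ m, ∑ k, (v m) ^ 2 * (A m k) ^ 2) / 2
            + (∑ m, ∑ k, (v k) ^ 2 * (A m k) ^ 2) / 2 := by
          rw [Finset.sum_div, Finset.sum_div, ← Finset.sum_add_distrib]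
          refine Finset.sum_congr rfl fun m _ => ?_
          rw [Finset.sum_div, Finset.sum_div, ← Finset.sum_add_distrib]
          exact Finset.sum_congr rfl fun k _ => by ring
      _ = ∑ m, ∑ k, (v m) ^ 2 * (A m k) ^ 2 := by rw [hsym]; ring
      _ = ∑ m, (v m) ^ 2 * s m := by simp only [hs, Finset.mul_sum]
      _ ≤ ∑ m, (v m) ^ 2 * S :=
          Finset.sum_le_sum fun m _ => mul_le_mul_of_nonneg_left (hsS m) (sq_nonneg _)
      _ = S := by rw [← Finset.sum_mul, hv, one_mul]
  -- bound on the diagonal part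
  have hQd : ∀ v : Fin R → ℝ, (∑ n, (v n) ^ 2 = 1) → (∑ m, s m * (v m) ^ 2) ≤ S := by
    intro v hv
    calc (∑ m, s m * (v m) ^ 2) ≤ ∑ m, S * (v m) ^ 2 :=
        Finset.sum_le_sum fun m _ => mul_le_mul_of_nonneg_right (hsS m) (sq_nonneg _)
      _ = S := by rw [← Finset.mul_sum, hv, mul_one]
  -- evaluate the quadratic form at w and u
  have hww : w ⬝ᵥ (μ • w) = μ := by
    rw [dotProduct_smul, smul_eq_mul,
      show w ⬝ᵥ w = ∑ n, (w n) ^ 2 from Finset.sum_congr rfl fun n _ => (sq (w n)).symm,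
      hw, mul_one]
  have huu : u ⬝ᵥ (μ • u) = μ := by
    rw [dotProduct_smul, smul_eq_mul,
      show u ⬝ᵥ u = ∑ n, (u n) ^ 2 from Finset.sum_congr rfl fun n _ => (sq (u n)).symm,
      hun, mul_one]
  have hQw := hQ w
  rw [heig, hww] at hQw
  have hQu := hQ u
  rw [hMu, huu] at hQu
  linarith [hQc w, hQc u, hgu, hQe w hw, hQe u hun, hQd w hw, hQd u hun, hQw, hQu]



lemma toEuclideanCLM_apply_coord (M : Matrix (Fin R) (Fin R) ℝ)
    (v : EuclideanSpace ℝ (Fin R)) (i : Fin R) :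
    (Matrix.toEuclideanCLM (𝕜 := ℝ) M v) i = (M *ᵥ (v : Fin R → ℝ)) i := rfl

lemma norm_le_of_eig (M : Matrix (Fin R) (Fin R) ℝ) (hM : M.IsHermitian) (c : ℝ)
    (hc : 0 ≤ c) (h : ∀ j, |hM.eigenvalues j| ≤ c) : specNorm M ≤ c := by
  have hMT : Mᵀ = M := by
    ext i j
    conv_rhs => rw [← hM]
    simp [Matrix.conjTranspose_apply]
  refine ContinuousLinearMap.opNorm_le_bound _ hc fun v => ?_
  set T := Matrix.toEuclideanCLM (𝕜 := ℝ) M with hT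
  set b := hM.eigenvectorBasis with hb
  have hrepr : ∀ (z : EuclideanSpace ℝ (Fin R)) (j : Fin R),
      b.repr z j = (b j : Fin R → ℝ) ⬝ᵥ (z : Fin R → ℝ) := by
    intro z j
    rw [OrthonormalBasis.repr_apply_apply]
    simp [PiLp.inner_apply, RCLike.inner_apply, dotProduct, mul_comm]
  have key : ∀ j, b.repr (T v) j = hM.eigenvalues j * b.repr v j := by
    intro j
    rw [hrepr, hrepr]
    have h1 : ((b j : Fin R → ℝ)) ⬝ᵥ ((T v : Fin R → ℝ)) = (b j : Fin R → ℝ) ⬝ᵥ (M *ᵥ v) := rfl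
    have h2 : M *ᵥ (b j : Fin R → ℝ) = hM.eigenvalues j • (b j : Fin R → ℝ) :=
      hM.mulVec_eigenvectorBasis j
    rw [h1, Matrix.dotProduct_mulVec, ← Matrix.mulVec_transpose, hMT, h2,
      smul_dotProduct, smul_eq_mul]
  have hTv2 : ‖T v‖ ^ 2 ≤ (c * ‖v‖) ^ 2 := by
    rw [← b.repr.norm_map (T v), ← b.repr.norm_map v, EuclideanSpace.norm_eq,
      EuclideanSpace.norm_eq, Real.sq_sqrt (Finset.sum_nonneg fun i _ => sq_nonneg _),
      mul_pow, Real.sq_sqrt (Finset.sum_nonneg fun i _ => sq_nonneg _), Finset.mul_sum]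
    refine Finset.sum_le_sum fun j _ => ?_
    rw [key j]
    have h2 : |hM.eigenvalues j| ^ 2 ≤ c ^ 2 := by
      have := h j
      nlinarith [abs_nonneg (hM.eigenvalues j)]
    simp only [Real.norm_eq_abs, abs_mul, mul_pow, sq_abs]
    rw [← sq_abs (hM.eigenvalues j)]
    exact mul_le_mul_of_nonneg_right h2 (sq_nonneg _)
  have h3 := Real.sqrt_le_sqrt hTv2
  rwa [Real.sqrt_sq (norm_nonneg _), Real.sqrt_sq (by positivity)] at h3

lemma row_le (x : Fin R → ℝ) (m : Fin R) :
    ∑ n, (Amat x m n) ^ 2 ≤ specNorm (Amat x) ^ 2 := by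
  set T := Matrix.toEuclideanCLM (𝕜 := ℝ) (Amat x) with hT
  set e : EuclideanSpace ℝ (Fin R) := EuclideanSpace.single m (1 : ℝ) with he
  have hnorme : ‖e‖ = 1 := by simp [he]
  have hcoord : ∀ n, (T e : Fin R → ℝ) n = Amat x n m := by
    intro n
    rw [toEuclideanCLM_apply_coord]
    have : (e : Fin R → ℝ) = Pi.single m (1 : ℝ) := by
      funext i
      rw [he]
      simp [EuclideanSpace.single_apply, Pi.single_apply]
    rw [this, Matrix.mulVec_single]
    simp
  have hTe : ‖T e‖ ^ 2 = ∑ n, (Amat x m n) ^ 2 := by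
    rw [EuclideanSpace.norm_eq, Real.sq_sqrt (Finset.sum_nonneg fun i _ => sq_nonneg _)]
    refine Finset.sum_congr rfl fun n _ => ?_
    rw [hcoord n, Real.norm_eq_abs, sq_abs, Amat_anti x m n]
    ring
  have hle : ‖T e‖ ≤ specNorm (Amat x) := by
    have := T.le_opNorm e
    rwa [hnorme, mul_one] at this
  rw [← hTe]
  have h0 : (0:ℝ) ≤ ‖T e‖ := norm_nonneg _
  nlinarith [hle]

/-- `max_m Σ_{n ≠ m} a_{m,n}² ≤ ‖A(x)‖² ≤ 3 max_m Σ_{n ≠ m} a_{m,n}²`. -/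
theorem specNorm_sq_bounds {R : ℕ} (hR : 0 < R) (x : Fin R → ℝ)
    (hx : Function.Injective x) :
    Finset.univ.sup' ⟨⟨0, hR⟩, Finset.mem_univ _⟩
        (fun m => ∑ n ∈ Finset.univ.erase m, (1 / (x m - x n)) ^ 2) ≤
      specNorm (Amat x) ^ 2 ∧
    specNorm (Amat x) ^ 2 ≤
      3 * Finset.univ.sup' ⟨⟨0, hR⟩, Finset.mem_univ _⟩
        (fun m => ∑ n ∈ Finset.univ.erase m, (1 / (x m - x n)) ^ 2) := by
  have hrow : ∀ m, ∑ n ∈ Finset.univ.erase m, (1 / (x m - x n)) ^ 2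
      = ∑ n, (Amat x m n) ^ 2 := by
    intro m
    rw [← Finset.sum_erase_add Finset.univ _ (Finset.mem_univ m), Amat_diag x m]
    rw [show ((0:ℝ)) ^ 2 = 0 by norm_num, add_zero]
    exact Finset.sum_congr rfl fun n hn => by
      rw [Amat_apply_ne x (Ne.symm (Finset.ne_of_mem_erase hn))]
  set S := Finset.univ.sup' ⟨⟨0, hR⟩, Finset.mem_univ _⟩
      (fun m => ∑ n ∈ Finset.univ.erase m, (1 / (x m - x n)) ^ 2) with hSdef
  have hS : ∀ m, ∑ n, (Amat x m n) ^ 2 ≤ S := by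
    intro m
    rw [hSdef, ← hrow m]
    exact Finset.le_sup'
      (fun m => ∑ n ∈ Finset.univ.erase m, (1 / (x m - x n)) ^ 2) (Finset.mem_univ m)
  have hS0 : 0 ≤ S :=
    le_trans (Finset.sum_nonneg fun n _ => sq_nonneg (Amat x ⟨0, hR⟩ n)) (hS ⟨0, hR⟩)
  constructor
  · refine Finset.sup'_le _ _ fun m _ => ?_
    rw [hrow m]
    exact row_le x m
  · have hfact : specNorm (Amat x) ^ 2 = specNorm ((Amat x)ᴴ * Amat x) := by
      unfold specNorm
      rw [_root_.map_mul, ← Matrix.star_eq_conjTranspose, map_star, sq]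
      exact (CStarRing.norm_star_mul_self).symm
    rw [hfact]
    refine norm_le_of_eig _ (Matrix.isHermitian_conjTranspose_mul_self (Amat x)) _
      (by positivity) fun j => ?_
    rw [abs_of_nonneg (Matrix.eigenvalues_conjTranspose_mul_self_nonneg (Amat x) j)]
    set hM := Matrix.isHermitian_conjTranspose_mul_self (Amat x) with hMdef
    set b := hM.eigenvectorBasis with hb
    have h1 : ‖b j‖ = 1 := b.orthonormal.1 j
    have h2 : Real.sqrt (∑ n, ‖(b j : Fin R → ℝ) n‖ ^ 2) = 1 := by
      rw [← EuclideanSpace.norm_eq]; exact h1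
    have h3 := congrArg (fun t => t ^ 2) h2
    simp only at h3
    rw [Real.sq_sqrt (Finset.sum_nonneg fun n _ => sq_nonneg _), one_pow] at h3
    have hunit : ∑ n, ((b j : Fin R → ℝ) n) ^ 2 = 1 := by
      rw [← h3]
      exact Finset.sum_congr rfl fun n _ => by rw [Real.norm_eq_abs, sq_abs]
    have heig : ((Amat x)ᴴ * Amat x) *ᵥ ((b j : Fin R → ℝ))
        = hM.eigenvalues j • ((b j : Fin R → ℝ)) := hM.mulVec_eigenvectorBasis j
    exact eig_le x hx S hS0 hS hunit heig
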